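/- Let U ⊆ ℝ³ be open with coordinates (x¹,x²,y³), write a* = ∂a/∂y³. Let φ, h₄ : U → ℝ be C², let Υ₂ : U → ℝ be C¹ in y³ and nowhere zero, and assume h₄ ≠ 0, h₄* ≠ 0 and ∂₃φ ≠ 0 everywhere. Define h₃ := (∂₃φ)·(∂₃h₄) / (2 Υ₂ h₄), and assume the generating-function relation e^{2φ}·|h₃ h₄| = (h₄*)² holds on U. Then h₃ is nowhere zero and on U: h₄** − (h₄*)²/(2h₄) − h₃* h₄*/(2h₃) = 2 h₃ h₄ Υ₂, i.e., the vertical Einstein equation −(1/(2h₃h₄))[h₄** − (h₄*)²/(2h₄) − h₃*h₄*/(2h₃)] = −Υ₂ is satisfied. -/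

import Mathlib

noncomputable section

/-- Partial derivative `∂₃ = ∂/∂y³` on `ℝ³` (coordinates `(x¹,x²,y³)` indexed by `0,1,2`),
taken as a derivative along the `y³` coordinate line; `pdy a = a*`. -/
def pdy (f : (Fin 3 → ℝ) → ℝ) (x : Fin 3 → ℝ) : ℝ :=
  deriv (fun t => f (Function.update x 2 t)) (x 2)

private lemma pdy_eq (f : (Fin 3 → ℝ) → ℝ) (x : Fin 3 → ℝ) (t : ℝ) :
    pdy f (Function.update x 2 t) = deriv (fun s => f (Function.update x 2 s)) t := by
  simp only [pdy, Function.update_idem, Function.update_self]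

private lemma deriv_diffAt {f : ℝ → ℝ} {t : ℝ} (h : ContDiffAt ℝ 2 f t) :
    DifferentiableAt ℝ (deriv f) t := by
  obtain ⟨u, huo, htu, hcd⟩ := h.contDiffOn' le_rfl (by simp)
  rw [Set.insert_eq_of_mem (Set.mem_univ _), Set.univ_inter] at hcd
  have h1 : ContDiffOn ℝ 1 (deriv f) u := hcd.deriv_of_isOpen huo (by norm_num)
  exact (h1.differentiableOn (by norm_num)).differentiableAt (huo.mem_nhds htu)

private lemma oneDim (Φ H Y H3 : ℝ → ℝ) (t₀ : ℝ)
    (hΦ : ContDiffAt ℝ 2 Φ t₀) (hH : ContDiffAt ℝ 2 H t₀)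
    (hY : ContDiffAt ℝ 1 Y t₀)
    (hYne : ∀ᶠ t in nhds t₀, Y t ≠ 0)
    (hHne : ∀ᶠ t in nhds t₀, H t ≠ 0)
    (hbne : deriv H t₀ ≠ 0) (hane : deriv Φ t₀ ≠ 0)
    (h3def : ∀ᶠ t in nhds t₀, H3 t = deriv Φ t * deriv H t / (2 * Y t * H t))
    (hgen : ∀ᶠ t in nhds t₀,
      Real.exp (2 * Φ t) * |H3 t * H t| = (deriv H t) ^ 2) :
    deriv (deriv H) t₀ - (deriv H t₀) ^ 2 / (2 * H t₀) -
      deriv H3 t₀ * deriv H t₀ / (2 * H3 t₀) = 2 * H3 t₀ * H t₀ * Y t₀ := by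
  have hΦ'd : DifferentiableAt ℝ (deriv Φ) t₀ := deriv_diffAt hΦ
  have hH'd : DifferentiableAt ℝ (deriv H) t₀ := deriv_diffAt hH
  set a := deriv Φ t₀ with ha
  set b := deriv H t₀ with hb
  set a' := deriv (deriv Φ) t₀ with ha'
  set c := deriv (deriv H) t₀ with hc
  set Y0 := Y t₀ with hY0def
  set Y' := deriv Y t₀ with hY'
  set h := H t₀ with hhdef
  have dΦ' : HasDerivAt (deriv Φ) a' t₀ := hΦ'd.hasDerivAt
  have dH' : HasDerivAt (deriv H) c t₀ := hH'd.hasDerivAt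
  have dΦ : HasDerivAt Φ a t₀ := (hΦ.differentiableAt (by norm_num)).hasDerivAt
  have dH : HasDerivAt H b t₀ := (hH.differentiableAt (by norm_num)).hasDerivAt
  have dY : HasDerivAt Y Y' t₀ := (hY.differentiableAt one_ne_zero).hasDerivAt
  have hY0 : Y0 ≠ 0 := hYne.self_of_nhds
  have hh : h ≠ 0 := hHne.self_of_nhds
  -- squared generating identity, eventually
  have Eq1 : (fun t => (deriv Φ t * deriv H t) ^ 2 * Real.exp (4 * Φ t))
      =ᶠ[nhds t₀] fun t => 4 * (Y t) ^ 2 * (deriv H t) ^ 4 := by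
    filter_upwards [hYne, hHne, h3def, hgen] with t hYt hHt h3t hgt
    have hP : deriv Φ t * deriv H t = H3 t * H t * (2 * Y t) := by
      rw [h3t]; field_simp
    have hE2 : (Real.exp (2 * Φ t)) ^ 2 = Real.exp (4 * Φ t) := by
      rw [sq, ← Real.exp_add]; congr 1; ring
    have : (deriv Φ t * deriv H t) ^ 2 * Real.exp (4 * Φ t)
        = 4 * (Y t) ^ 2 * (Real.exp (2 * Φ t) * |H3 t * H t|) ^ 2 := by
      rw [hP, mul_pow (Real.exp (2 * Φ t)), sq_abs, ← hE2]; ring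
    rw [this, hgt]; ring
  have base : (a * b) ^ 2 * Real.exp (4 * Φ t₀) = 4 * Y0 ^ 2 * b ^ 4 :=
    Eq1.self_of_nhds
  -- derivative of both sides of Eq1
  have lhsD : HasDerivAt (fun t => (deriv Φ t * deriv H t) ^ 2 * Real.exp (4 * Φ t))
      ((2 * (a * b) * (a' * b + a * c)) * Real.exp (4 * Φ t₀)
        + (a * b) ^ 2 * (Real.exp (4 * Φ t₀) * (4 * a))) t₀ := by
    have := ((dΦ'.mul dH').pow 2).mul ((dΦ.const_mul 4).exp)
    refine this.congr_deriv ?_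
    simp only [Pi.mul_apply, Pi.pow_apply]
    norm_num
    ring
  have rhsD : HasDerivAt (fun t => 4 * (Y t) ^ 2 * (deriv H t) ^ 4)
      ((8 * Y0 * Y') * b ^ 4 + (4 * Y0 ^ 2) * (4 * b ^ 3 * c)) t₀ := by
    have := ((dY.pow 2).const_mul 4).mul (dH'.pow 4)
    refine this.congr_deriv ?_
    simp only [Pi.mul_apply, Pi.pow_apply]
    norm_num
    ring
  have key0 : (2 * (a * b) * (a' * b + a * c)) * Real.exp (4 * Φ t₀)
        + (a * b) ^ 2 * (Real.exp (4 * Φ t₀) * (4 * a))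
      = (8 * Y0 * Y') * b ^ 4 + (4 * Y0 ^ 2) * (4 * b ^ 3 * c) :=
    ((rhsD.congr_of_eventuallyEq Eq1).unique lhsD).symm
  have hE : a ^ 2 * Real.exp (4 * Φ t₀) = 4 * Y0 ^ 2 * b ^ 2 := by
    apply mul_right_cancel₀ (pow_ne_zero 2 hbne)
    linear_combination base
  have keyS : 8 * b ^ 3 * Y0 * (a * Y0 * c)
      = 8 * b ^ 3 * Y0 * (2 * a ^ 2 * b * Y0 + a' * b * Y0 - a * b * Y') := by
    linear_combination (-a) * key0 + (2 * b * (a' * b + a * c) + 4 * a ^ 2 * b ^ 2) * hE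
  have key : a * Y0 * c = 2 * a ^ 2 * b * Y0 + a' * b * Y0 - a * b * Y' :=
    mul_left_cancel₀
      (mul_ne_zero (mul_ne_zero (by norm_num) (pow_ne_zero 3 hbne)) hY0) keyS
  have hden : (2 * Y0 * h) ≠ 0 := mul_ne_zero (mul_ne_zero two_ne_zero hY0) hh
  have denomD : HasDerivAt (fun t => 2 * Y t * H t) (2 * Y' * h + 2 * Y0 * b) t₀ := by
    have := (dY.const_mul 2).mul dH
    exact this
  have quotD : HasDerivAt (fun t => deriv Φ t * deriv H t / (2 * Y t * H t))
      (((a' * b + a * c) * (2 * Y0 * h) - a * b * (2 * Y' * h + 2 * Y0 * b)) /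
        (2 * Y0 * h) ^ 2) t₀ :=
    (dΦ'.mul dH').div denomD hden
  have h30 : H3 t₀ = a * b / (2 * Y0 * h) := h3def.self_of_nhds
  have hD : deriv H3 t₀ = ((a' * b + a * c) * (2 * Y0 * h) - a * b * (2 * Y' * h + 2 * Y0 * b)) /
      (2 * Y0 * h) ^ 2 := (quotD.congr_of_eventuallyEq h3def).deriv
  rw [hD, h30]
  field_simp
  linear_combination h * key

/-- General-source verification: with `h₃ := φ* h₄*/(2 Υ₂ h₄)` and the generating-function
relation `e^{2φ}|h₃h₄| = (h₄*)²`, the vertical Einstein equation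
`−(1/(2h₃h₄))[h₄** − (h₄*)²/(2h₄) − h₃*h₄*/(2h₃)] = −Υ₂` holds identically. -/
theorem vertical_equation_general_source
    (U : Set (Fin 3 → ℝ)) (hU : IsOpen U)
    (φ h₄ Υ₂ : (Fin 3 → ℝ) → ℝ)
    (hφ : ContDiffOn ℝ 2 φ U) (hh₄C : ContDiffOn ℝ 2 h₄ U)
    (hΥ : ∀ x ∈ U, ContDiffAt ℝ 1 (fun t => Υ₂ (Function.update x 2 t)) (x 2))
    (hΥne : ∀ x ∈ U, Υ₂ x ≠ 0)
    (hh₄ne : ∀ x ∈ U, h₄ x ≠ 0)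
    (hh₄s : ∀ x ∈ U, pdy h₄ x ≠ 0)
    (hφs : ∀ x ∈ U, pdy φ x ≠ 0)
    (h₃ : (Fin 3 → ℝ) → ℝ)
    (hh₃def : ∀ x, h₃ x = pdy φ x * pdy h₄ x / (2 * Υ₂ x * h₄ x))
    (hgen : ∀ x ∈ U, Real.exp (2 * φ x) * |h₃ x * h₄ x| = (pdy h₄ x) ^ 2) :
    (∀ x ∈ U, h₃ x ≠ 0) ∧
    (∀ x ∈ U,
      pdy (pdy h₄) x - (pdy h₄ x) ^ 2 / (2 * h₄ x) -
        pdy h₃ x * pdy h₄ x / (2 * h₃ x) = 2 * h₃ x * h₄ x * Υ₂ x) ∧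
    (∀ x ∈ U,
      -(1 / (2 * h₃ x * h₄ x)) *
        (pdy (pdy h₄) x - (pdy h₄ x) ^ 2 / (2 * h₄ x) -
          pdy h₃ x * pdy h₄ x / (2 * h₃ x)) = -Υ₂ x) := by
  have h3ne : ∀ x ∈ U, h₃ x ≠ 0 := by
    intro x hx
    rw [hh₃def x]
    exact div_ne_zero (mul_ne_zero (hφs x hx) (hh₄s x hx))
      (mul_ne_zero (mul_ne_zero two_ne_zero (hΥne x hx)) (hh₄ne x hx))
  have main : ∀ x ∈ U, pdy (pdy h₄) x - (pdy h₄ x) ^ 2 / (2 * h₄ x) -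
      pdy h₃ x * pdy h₄ x / (2 * h₃ x) = 2 * h₃ x * h₄ x * Υ₂ x := by
    intro x hx
    have hLx : Function.update x 2 (x 2) = x := Function.update_eq_self 2 x
    have hLC : ContDiff ℝ 2 (fun t => Function.update x 2 t) := contDiff_update 2 x 2
    have hev : ∀ᶠ t in nhds (x 2), Function.update x 2 t ∈ U := by
      have hca : ContinuousAt (fun t => Function.update x 2 t) (x 2) :=
        hLC.continuous.continuousAt
      exact hca.eventually_mem (by rw [hLx]; exact hU.mem_nhds hx)
    have hΦ2 : ContDiffAt ℝ 2 (fun t => φ (Function.update x 2 t)) (x 2) := by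
      have h1 : ContDiffAt ℝ 2 φ (Function.update x 2 (x 2)) := by
        rw [hLx]; exact hφ.contDiffAt (hU.mem_nhds hx)
      exact h1.comp (x 2) hLC.contDiffAt
    have hH2 : ContDiffAt ℝ 2 (fun t => h₄ (Function.update x 2 t)) (x 2) := by
      have h1 : ContDiffAt ℝ 2 h₄ (Function.update x 2 (x 2)) := by
        rw [hLx]; exact hh₄C.contDiffAt (hU.mem_nhds hx)
      exact h1.comp (x 2) hLC.contDiffAt
    have res := oneDim (fun t => φ (Function.update x 2 t))
      (fun t => h₄ (Function.update x 2 t)) (fun t => Υ₂ (Function.update x 2 t))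
      (fun t => h₃ (Function.update x 2 t)) (x 2) hΦ2 hH2 (hΥ x hx)
      (by filter_upwards [hev] with t ht using hΥne _ ht)
      (by filter_upwards [hev] with t ht using hh₄ne _ ht)
      (hh₄s x hx) (hφs x hx)
      (Filter.Eventually.of_forall fun t => by
        have := hh₃def (Function.update x 2 t)
        rw [pdy_eq, pdy_eq] at this
        exact this)
      (by
        filter_upwards [hev] with t ht
        have := hgen _ ht
        rw [pdy_eq] at this
        exact this)
    have e3 : pdy (pdy h₄) x
        = deriv (deriv (fun t => h₄ (Function.update x 2 t))) (x 2) := by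
      have heq : (fun t => pdy h₄ (Function.update x 2 t))
          = deriv (fun t => h₄ (Function.update x 2 t)) := funext fun t => pdy_eq h₄ x t
      show deriv (fun t => pdy h₄ (Function.update x 2 t)) (x 2) = _
      rw [heq]
    rw [show pdy h₄ x = deriv (fun t => h₄ (Function.update x 2 t)) (x 2) from rfl,
      show pdy h₃ x = deriv (fun t => h₃ (Function.update x 2 t)) (x 2) from rfl]
    rw [e3]
    simpa [Function.update_eq_self] using res
  refine ⟨h3ne, main, fun x hx => ?_⟩
  rw [main x hx]
  have h1 := h3ne x hx
  have h2 := hh₄ne x hx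
  field_simp
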